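/- The set C*_{u₀} = {x : η(x) ≥ Q(η,1−u₀)} solves the constrained optimization problem: it minimizes P(X ∈ C | Y = −1) over all measurable sets C satisfying P(X ∈ C) ≥ u₀. -/

import Mathlib

open MeasureTheory Set

namespace LocalRanking

variable {Ω 𝒳 : Type*} [MeasurableSpace Ω] [MeasurableSpace 𝒳]

/-- The generalized-inverse `v`-quantile of a distribution `μ` on `ℝ`:
`Q(μ, v) = inf {t : F(t) ≥ v}`. -/
noncomputable def quantile (μ : Measure ℝ) (v : ℝ) : ℝ :=
  sInf {t : ℝ | v ≤ (μ (Iic t)).toReal}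

/-- Classification error `P(Y ≠ g(X))` of the classifier `g = 2·1_C − 1` built from a set `C`. -/
noncomputable def errSet (P : Measure Ω) (X : Ω → 𝒳) (Y : Ω → ℝ) (C : Set 𝒳) : ℝ :=
  (P {ω | (Y ω = 1 ∧ X ω ∉ C) ∨ (Y ω = -1 ∧ X ω ∈ C)}).toReal

/-- `C*_{u₀} = {x : η(x) ≥ Q(η,1−u₀)}` minimizes `P(X ∈ C | Y=−1)`
over all measurable sets `C` with `P(X ∈ C) ≥ u₀`. -/
theorem best_instances_minimum_volume
    (P : Measure Ω) [IsProbabilityMeasure P]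
    (X : Ω → 𝒳) (Y : Ω → ℝ) (η : 𝒳 → ℝ)
    (hX : Measurable X) (hY : Measurable Y) (hηm : Measurable η)
    (hYval : ∀ ω, Y ω = 1 ∨ Y ω = -1)
    (hηbd : ∀ x, η x ∈ Icc (0 : ℝ) 1)
    (hη : ∀ A : Set 𝒳, MeasurableSet A →
      (P {ω | X ω ∈ A ∧ Y ω = 1}).toReal = ∫ x in A, η x ∂(P.map X))
    (p : ℝ) (hp : p = (P {ω | Y ω = 1}).toReal) (hp01 : p ∈ Ioo (0 : ℝ) 1)
    (u₀ q : ℝ) (hu₀ : u₀ ∈ Ioo (0 : ℝ) 1)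
    (hq : q = quantile (P.map fun ω => η (X ω)) (1 - u₀))
    (hmass_star : ((P.map X) {x | q ≤ η x}).toReal = u₀) :
    ∀ C : Set 𝒳, MeasurableSet C → u₀ ≤ ((P.map X) C).toReal →
      (P {ω | X ω ∈ {x | q ≤ η x} ∧ Y ω = -1}).toReal / (P {ω | Y ω = -1}).toReal ≤
        (P {ω | X ω ∈ C ∧ Y ω = -1}).toReal / (P {ω | Y ω = -1}).toReal := by
  intro C hC hCmass
  set μ := P.map X with hμ
  haveI hμprob : IsProbabilityMeasure μ := Measure.isProbabilityMeasure_map hX.aemeasurable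
  set S : Set 𝒳 := {x | q ≤ η x} with hSdef
  have hSmeas : MeasurableSet S := measurableSet_le measurable_const hηm
  -- integrability of η
  have hint : Integrable η μ := by
    refine Integrable.mono' (integrable_const 1) hηm.aestronglyMeasurable ?_
    filter_upwards with x
    rw [Real.norm_eq_abs, abs_le]
    exact ⟨by linarith [(hηbd x).1], (hηbd x).2⟩
  -- key decomposition
  have key : ∀ A : Set 𝒳, MeasurableSet A →
      (P {ω | X ω ∈ A ∧ Y ω = -1}).toReal = (μ A).toReal - ∫ x in A, η x ∂μ := by
    intro A hA
    have h1 : X ⁻¹' A = {ω | X ω ∈ A ∧ Y ω = 1} ∪ {ω | X ω ∈ A ∧ Y ω = -1} := by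
      ext ω
      simp only [mem_preimage, mem_setOf_eq, mem_union]
      constructor
      · intro h
        rcases hYval ω with h' | h'
        · exact Or.inl ⟨h, h'⟩
        · exact Or.inr ⟨h, h'⟩
      · rintro (⟨h, _⟩ | ⟨h, _⟩) <;> exact h
    have hdisj : Disjoint {ω | X ω ∈ A ∧ Y ω = 1} {ω | X ω ∈ A ∧ Y ω = -1} := by
      rw [Set.disjoint_left]
      rintro ω ⟨_, hy1⟩ ⟨_, hy2⟩
      rw [hy1] at hy2; norm_num at hy2
    have hm2 : MeasurableSet {ω | X ω ∈ A ∧ Y ω = -1} :=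
      (hX hA).inter (hY (measurableSet_singleton (-1)))
    have hsum : μ A = P {ω | X ω ∈ A ∧ Y ω = 1} + P {ω | X ω ∈ A ∧ Y ω = -1} := by
      rw [hμ, Measure.map_apply hX hA, h1, measure_union hdisj hm2]
    have hfin1 : P {ω | X ω ∈ A ∧ Y ω = 1} ≠ ⊤ := measure_ne_top _ _
    have hfin2 : P {ω | X ω ∈ A ∧ Y ω = -1} ≠ ⊤ := measure_ne_top _ _
    have := hη A hA
    have htr : (μ A).toReal
        = (P {ω | X ω ∈ A ∧ Y ω = 1}).toReal + (P {ω | X ω ∈ A ∧ Y ω = -1}).toReal := by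
      rw [hsum, ENNReal.toReal_add hfin1 hfin2]
    rw [htr, this]; ring
  -- q ≤ 1
  have hfm : Measurable fun ω => η (X ω) := hηm.comp hX
  have hq1 : q ≤ 1 := by
    rw [hq, quantile]
    apply csInf_le
    · refine ⟨0, fun t ht => ?_⟩
      by_contra hlt
      push_neg at hlt
      have hemp : (fun ω => η (X ω)) ⁻¹' Iic t = ∅ := by
        ext ω
        simp only [mem_preimage, mem_Iic, mem_empty_iff_false, iff_false, not_le]
        calc t < 0 := hlt
          _ ≤ η (X ω) := (hηbd _).1
      have : (P.map fun ω => η (X ω)) (Iic t) = 0 := by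
        rw [Measure.map_apply hfm measurableSet_Iic, hemp, measure_empty]
      simp only [mem_setOf_eq, this, ENNReal.toReal_zero] at ht
      linarith [hu₀.2]
    · show 1 - u₀ ≤ ((P.map fun ω => η (X ω)) (Iic 1)).toReal
      have huniv : (fun ω => η (X ω)) ⁻¹' Iic 1 = univ := by
        ext ω; simp [(hηbd (X ω)).2]
      have : (P.map fun ω => η (X ω)) (Iic 1) = 1 := by
        rw [Measure.map_apply hfm measurableSet_Iic, huniv, measure_univ]
      rw [this]
      simp only [ENNReal.toReal_one]
      linarith [hu₀.1]
  -- integral splitting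
  have hsplitC : ∫ x in C ∩ S, η x ∂μ + ∫ x in C \ S, η x ∂μ = ∫ x in C, η x ∂μ :=
    integral_inter_add_diff hSmeas hint.integrableOn
  have hsplitS : ∫ x in S ∩ C, η x ∂μ + ∫ x in S \ C, η x ∂μ = ∫ x in S, η x ∂μ :=
    integral_inter_add_diff hC hint.integrableOn
  -- bounds on the two difference pieces
  have hb1 : ∫ x in C \ S, η x ∂μ ≤ q * (μ (C \ S)).toReal := by
    have := setIntegral_mono_on hint.integrableOn (integrableOn_const (measure_ne_top _ _) enorm_ne_top)
      (hC.diff hSmeas) (fun x hx => le_of_lt (not_le.mp hx.2))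
    calc ∫ x in C \ S, η x ∂μ ≤ ∫ _ in C \ S, q ∂μ := this
      _ = (μ (C \ S)).toReal * q := by rw [setIntegral_const]; simp [smul_eq_mul, Measure.real]
      _ = q * (μ (C \ S)).toReal := mul_comm _ _
  have hb2 : q * (μ (S \ C)).toReal ≤ ∫ x in S \ C, η x ∂μ := by
    have := setIntegral_mono_on (integrableOn_const (measure_ne_top _ _) enorm_ne_top)
      hint.integrableOn (hSmeas.diff hC) (fun x hx => hx.1)
    calc q * (μ (S \ C)).toReal = (μ (S \ C)).toReal * q := mul_comm _ _
      _ = ∫ _ in S \ C, q ∂μ := by rw [setIntegral_const]; simp [smul_eq_mul, Measure.real]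
      _ ≤ ∫ x in S \ C, η x ∂μ := this
  -- measure arithmetic
  have hmC : (μ (C ∩ S)).toReal + (μ (C \ S)).toReal = (μ C).toReal := by
    rw [← ENNReal.toReal_add (measure_ne_top _ _) (measure_ne_top _ _),
      measure_inter_add_diff _ hSmeas]
  have hmS : (μ (S ∩ C)).toReal + (μ (S \ C)).toReal = (μ S).toReal := by
    rw [← ENNReal.toReal_add (measure_ne_top _ _) (measure_ne_top _ _),
      measure_inter_add_diff _ hC]
  have hCSeq : (μ (C ∩ S)).toReal = (μ (S ∩ C)).toReal := by rw [inter_comm]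
  have hSu : (μ S).toReal = u₀ := hmass_star
  -- core inequality
  have hcore : ∫ x in C, η x ∂μ - ∫ x in S, η x ∂μ ≤ (μ C).toReal - u₀ := by
    have h1 : ∫ x in C, η x ∂μ - ∫ x in S, η x ∂μ
        = ∫ x in C \ S, η x ∂μ - ∫ x in S \ C, η x ∂μ := by
      rw [← hsplitC, ← hsplitS]
      have : ∫ x in C ∩ S, η x ∂μ = ∫ x in S ∩ C, η x ∂μ := by rw [inter_comm]
      linarith
    have h2 : ∫ x in C \ S, η x ∂μ - ∫ x in S \ C, η x ∂μ
        ≤ q * ((μ C).toReal - u₀) := by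
      have : q * (μ (C \ S)).toReal - q * (μ (S \ C)).toReal
          = q * ((μ C).toReal - u₀) := by
        rw [← mul_sub]
        congr 1
        linarith
      linarith
    have h3 : q * ((μ C).toReal - u₀) ≤ (μ C).toReal - u₀ := by
      have ht : (0:ℝ) ≤ (μ C).toReal - u₀ := by linarith
      nlinarith
    linarith
  -- conclusion
  have hnum : (P {ω | X ω ∈ S ∧ Y ω = -1}).toReal ≤ (P {ω | X ω ∈ C ∧ Y ω = -1}).toReal := by
    rw [key S hSmeas, key C hC]
    rw [hSu]
    linarith
  have hd : (0:ℝ) ≤ (P {ω | Y ω = -1}).toReal := ENNReal.toReal_nonneg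
  rcases hd.eq_or_lt with h | h
  · rw [← h]; simp
  · exact (div_le_div_iff_of_pos_right h).2 hnum

end LocalRanking
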